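/- Suppose the law ν₀ of X₀ has a density V₀ : (0,∞) → [0,∞) with ‖V₀‖_∞ := ess sup V₀ < ∞. Let L and L̄ be two solutions of the McKean–Vlasov problem (MV) associated with the same X₀, Z, f and α. Then for every r ≥ 0, |L_r − L̄_r| ≤ |α| · ‖V₀‖_∞ · sup_{s≤r} |f(L_s) − f(L̄_s)|. -/

import Mathlib

open MeasureTheory ProbabilityTheory Filter Set Function

noncomputable section

variable {Ω : Type*} [MeasureSpace Ω]

/-- The event that the particle `X_s = X₀ + Z_s − α f(L_s)` has reached `(-∞, 0]` by time `t`. -/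
def hitBy (X0 : Ω → ℝ) (Z : ℝ → Ω → ℝ) (f : ℝ → ℝ) (α : ℝ) (L : ℝ → ℝ) (t : ℝ) : Set Ω :=
  {ω | ∃ s ∈ Set.Icc (0 : ℝ) t, X0 ω + Z s ω - α * f (L s) ≤ 0}

/-- A solution of the McKean--Vlasov problem (MV). -/
def IsMVSolution (X0 : Ω → ℝ) (Z : ℝ → Ω → ℝ) (f : ℝ → ℝ) (α : ℝ) (L : ℝ → ℝ) : Prop :=
  MonotoneOn L (Set.Ici 0) ∧ L 0 = 0 ∧ (∀ t, 0 ≤ t → L t ∈ Set.Icc (0 : ℝ) 1) ∧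
  (∀ t, 0 ≤ t → ContinuousWithinAt L (Set.Ici t) t) ∧
  (∀ t, 0 ≤ t → L t = ((ℙ : Measure Ω) (hitBy X0 Z f α L t)).toReal)

/-- A countable dense-from-the-right grid in `[0, r]` containing `r`. -/
def Dgrid (r : ℝ) : Set ℝ := insert r (Set.Icc 0 r ∩ Set.range ((↑) : ℚ → ℝ))

lemma Dgrid_countable (r : ℝ) : (Dgrid r).Countable :=
  ((Set.countable_range _).mono Set.inter_subset_right).insert r

lemma Dgrid_subset {r : ℝ} (hr : 0 ≤ r) : Dgrid r ⊆ Set.Icc 0 r := by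
  intro s hs
  rcases hs with rfl | hs
  · exact ⟨hr, le_rfl⟩
  · exact hs.1

lemma r_mem_Dgrid (r : ℝ) : r ∈ Dgrid r := Set.mem_insert _ _

/-- One-sided stability bound. -/
theorem mv_one_sided
    (hprob : IsProbabilityMeasure (ℙ : Measure Ω))
    (X0 : Ω → ℝ) (hX0meas : Measurable X0)
    (Z : ℝ → Ω → ℝ) (hZmeas : ∀ t, Measurable (Z t))
    (hZcont : ∀ ω, Continuous fun t => Z t ω)
    (hindep : IndepFun X0 (fun ω => fun t => Z t ω) ℙ)
    (f : ℝ → ℝ) (hf : ContinuousOn f (Set.Icc 0 1)) (α : ℝ)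
    (V₀ : ℝ → ℝ) (hV₀nonneg : ∀ x, 0 ≤ V₀ x)
    (hdens : Measure.map X0 (ℙ : Measure Ω)
      = volume.withDensity fun x => ENNReal.ofReal (V₀ x))
    (hV₀bdd : MemLp V₀ ⊤ volume)
    (L Lbar : ℝ → ℝ)
    (hL : IsMVSolution X0 Z f α L) (hLbar : IsMVSolution X0 Z f α Lbar)
    (r : ℝ) (hr : 0 ≤ r) (c : ℝ) (hc0 : 0 ≤ c)
    (hc : ∀ s ∈ Set.Icc (0:ℝ) r, |α| * |f (L s) - f (Lbar s)| ≤ c) :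
    L r - Lbar r ≤ (eLpNorm V₀ ⊤ volume).toReal * c := by
  obtain ⟨hLmono, hL0, hLrange, hLrc, hLeq⟩ := hL
  obtain ⟨hMmono, hM0, hMrange, hMrc, hMeq⟩ := hLbar
  haveI : Countable (Dgrid r) := (Dgrid_countable r).to_subtype
  haveI : Nonempty (Dgrid r) := ⟨⟨r, r_mem_Dgrid r⟩⟩
  obtain ⟨Cf, hCf⟩ := isCompact_Icc.exists_bound_of_continuousOn hf
  -- boundedness of the families
  have hbdd : ∀ (ω : Ω) (L' : ℝ → ℝ), (∀ t, 0 ≤ t → L' t ∈ Set.Icc (0:ℝ) 1) →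
      BddAbove (Set.range fun s : Dgrid r => α * f (L' s) - Z s ω) := by
    intro ω L' hL'
    obtain ⟨CZ, hCZ⟩ := isCompact_Icc.exists_bound_of_continuousOn
      ((hZcont ω).continuousOn : ContinuousOn (fun t => Z t ω) (Set.Icc 0 r))
    refine ⟨|α| * Cf + CZ, ?_⟩
    rintro x ⟨⟨s, hs⟩, rfl⟩
    have hsI : s ∈ Set.Icc 0 r := Dgrid_subset hr hs
    have h1 : |f (L' s)| ≤ Cf := by simpa using hCf _ (hL' s hsI.1)
    have h2 : |Z s ω| ≤ CZ := by simpa using hCZ s hsI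
    have h3 : α * f (L' s) ≤ |α| * Cf := by
      calc α * f (L' s) ≤ |α * f (L' s)| := le_abs_self _
        _ = |α| * |f (L' s)| := abs_mul _ _
        _ ≤ |α| * Cf := mul_le_mul_of_nonneg_left h1 (abs_nonneg α)
    have h4 : -Z s ω ≤ CZ := by
      rcases abs_le.mp h2 with ⟨ha, hb⟩; linarith
    show α * f (L' s) - Z s ω ≤ |α| * Cf + CZ
    linarith
  -- the countable sup dominates over the whole interval
  have hle : ∀ (L' : ℝ → ℝ), (∀ t, 0 ≤ t → L' t ∈ Set.Icc (0:ℝ) 1) →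
      (∀ t, 0 ≤ t → ContinuousWithinAt L' (Set.Ici t) t) →
      ∀ ω, ∀ s ∈ Set.Icc (0:ℝ) r,
        α * f (L' s) - Z s ω ≤ ⨆ u : Dgrid r, (α * f (L' u) - Z u ω) := by
    intro L' hrange hrc ω s hs
    have hb := hbdd ω L' hrange
    rcases eq_or_lt_of_le hs.2 with rfl | hsr
    · exact le_ciSup hb ⟨s, r_mem_Dgrid s⟩
    · by_contra hcon
      push_neg at hcon
      set M := ⨆ u : Dgrid r, (α * f (L' u) - Z u ω) with hM
      set g : ℝ → ℝ := fun u => α * f (L' u) - Z u ω with hg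
      have hgc : ContinuousWithinAt g (Set.Ici s) s := by
        have h1 : ContinuousWithinAt (fun u => f (L' u)) (Set.Ici s) s :=
          (hf (L' s) (hrange s hs.1)).comp (hrc s hs.1)
            (fun u hu => hrange u (le_trans hs.1 hu))
        exact (continuousWithinAt_const.mul h1).sub
          ((hZcont ω).continuousAt.continuousWithinAt)
      have hε : (0:ℝ) < g s - M := sub_pos.mpr hcon
      obtain ⟨δ, hδ0, hδ⟩ := Metric.continuousWithinAt_iff.mp hgc _ hε
      obtain ⟨q, hq1, hq2⟩ := exists_rat_btwn (lt_min hsr (lt_add_of_pos_right s hδ0))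
      have hqr : (q:ℝ) ≤ r := le_of_lt (lt_of_lt_of_le hq2 (min_le_left _ _))
      have hq0 : (0:ℝ) ≤ q := le_of_lt (lt_of_le_of_lt hs.1 hq1)
      have hqD : (q:ℝ) ∈ Dgrid r := Set.mem_insert_iff.mpr (Or.inr ⟨⟨hq0, hqr⟩, ⟨q, rfl⟩⟩)
      have hdist : dist (q:ℝ) s < δ := by
        rw [Real.dist_eq, abs_of_pos (sub_pos.mpr hq1)]
        have := lt_of_lt_of_le hq2 (min_le_right _ _); linarith
      have hclose := hδ (Set.mem_Ici.mpr (le_of_lt hq1)) hdist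
      rw [Real.dist_eq] at hclose
      have hgq : M < g (q:ℝ) := by
        rcases abs_lt.mp hclose with ⟨ha, hb⟩; linarith
      exact absurd (le_ciSup hb ⟨(q:ℝ), hqD⟩) (not_le.mpr hgq)
  set Y : Ω → ℝ → ℝ := fun ω => fun t => Z t ω with hYdef
  set G : (ℝ → ℝ) → ℝ := fun y => ⨆ s : Dgrid r, (α * f (Lbar s) - y s) with hGdef
  set Gfn : (ℝ → ℝ) → ℝ := fun y => ⨆ s : Dgrid r, (α * f (L s) - y s) with hGLdef
  set M : Ω → ℝ := fun ω => Gfn (Y ω) with hMdef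
  set Mb : Ω → ℝ := fun ω => G (Y ω) with hMbdef
  -- inclusion 1
  have hsub1 : hitBy X0 Z f α L r ⊆ {ω | X0 ω ≤ M ω} := by
    rintro ω ⟨s, hsI, hle0⟩
    have h1 : X0 ω ≤ α * f (L s) - Z s ω := by linarith
    exact le_trans h1 (hle L hLrange hLrc ω s hsI)
  -- inclusion 2
  have hsub2 : {ω | X0 ω < Mb ω} ⊆ hitBy X0 Z f α Lbar r := by
    intro ω hω
    have hω' : X0 ω < ⨆ s : Dgrid r, (α * f (Lbar s) - Z s ω) := hω
    obtain ⟨⟨s, hsD⟩, hs⟩ := exists_lt_of_lt_ciSup hω'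
    exact ⟨s, Dgrid_subset hr hsD, by simp only at hs; linarith⟩
  -- comparison
  have hcomp : ∀ ω, M ω ≤ Mb ω + c := by
    intro ω
    refine ciSup_le fun u => ?_
    obtain ⟨s, hsD⟩ := u
    have hsI := Dgrid_subset hr hsD
    have h1 : α * f (Lbar s) - Z s ω ≤ Mb ω := le_ciSup (hbdd ω Lbar hMrange) ⟨s, hsD⟩
    have h2 : α * (f (L s) - f (Lbar s)) ≤ |α| * |f (L s) - f (Lbar s)| := by
      calc α * (f (L s) - f (Lbar s)) ≤ |α * (f (L s) - f (Lbar s))| := le_abs_self _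
        _ = |α| * |f (L s) - f (Lbar s)| := abs_mul _ _
    have h3 := hc s hsI
    have h4 : α * f (L s) - Z s ω
        = α * f (Lbar s) - Z s ω + α * (f (L s) - f (Lbar s)) := by ring
    show α * f (L s) - Z s ω ≤ Mb ω + c
    linarith
  -- measurability
  have hYmeas : Measurable Y := measurable_pi_lambda _ fun t => hZmeas t
  have hGmeas : Measurable G :=
    Measurable.iSup fun s => (measurable_pi_apply ((s : ℝ))).const_sub _
  set T : Set ((ℝ → ℝ) × ℝ) := {p | G p.1 ≤ p.2 ∧ p.2 ≤ G p.1 + c} with hTdef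
  have hTmeas : MeasurableSet T :=
    (measurableSet_le (hGmeas.comp measurable_fst) measurable_snd).inter
      (measurableSet_le measurable_snd ((hGmeas.comp measurable_fst).add_const c))
  have hmap : Measure.map (fun ω => (Y ω, X0 ω)) (ℙ : Measure Ω)
      = (Measure.map Y ℙ).prod (Measure.map X0 ℙ) :=
    (indepFun_iff_map_prod_eq_prod_map_map hYmeas.aemeasurable
      hX0meas.aemeasurable).mp hindep.symm
  haveI : IsProbabilityMeasure (Measure.map Y (ℙ : Measure Ω)) :=
    Measure.isProbabilityMeasure_map hYmeas.aemeasurable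
  haveI : IsProbabilityMeasure (Measure.map X0 (ℙ : Measure Ω)) :=
    Measure.isProbabilityMeasure_map hX0meas.aemeasurable
  set K := eLpNorm V₀ ⊤ volume with hK
  have hbound : ∀ᵐ x ∂(volume : Measure ℝ), ENNReal.ofReal (V₀ x) ≤ K := by
    filter_upwards [ae_le_eLpNormEssSup (f := V₀) (μ := volume)] with x hx
    rw [hK, eLpNorm_exponent_top, ← Real.enorm_eq_ofReal (hV₀nonneg x)]
    exact hx
  have hslice : ∀ a : ℝ,
      (Measure.map X0 (ℙ : Measure Ω)) (Set.Icc a (a + c)) ≤ K * ENNReal.ofReal c := by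
    intro a
    rw [hdens, withDensity_apply _ measurableSet_Icc]
    calc ∫⁻ x in Set.Icc a (a+c), ENNReal.ofReal (V₀ x) ∂volume
        ≤ ∫⁻ _x in Set.Icc a (a+c), K ∂volume :=
          lintegral_mono_ae (ae_restrict_of_ae hbound)
      _ = K * volume (Set.Icc a (a+c)) := setLIntegral_const _ _
      _ = K * ENNReal.ofReal c := by rw [Real.volume_Icc, add_sub_cancel_left]
  have hE : (ℙ : Measure Ω) {ω | Mb ω ≤ X0 ω ∧ X0 ω ≤ Mb ω + c} ≤ K * ENNReal.ofReal c := by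
    have hpre : {ω | Mb ω ≤ X0 ω ∧ X0 ω ≤ Mb ω + c} = (fun ω => (Y ω, X0 ω)) ⁻¹' T := rfl
    rw [hpre, ← Measure.map_apply (hYmeas.prodMk hX0meas) hTmeas, hmap,
      Measure.prod_apply hTmeas]
    calc ∫⁻ y, (Measure.map X0 (ℙ : Measure Ω)) (Prod.mk y ⁻¹' T) ∂(Measure.map Y ℙ)
        ≤ ∫⁻ _y, K * ENNReal.ofReal c ∂(Measure.map Y (ℙ : Measure Ω)) := by
          refine lintegral_mono fun y => ?_
          have : (Prod.mk y ⁻¹' T) = Set.Icc (G y) (G y + c) := rfl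
          rw [this]; exact hslice (G y)
      _ = K * ENNReal.ofReal c := by simp
  have hfin1 : (ℙ : Measure Ω) (hitBy X0 Z f α Lbar r) ≠ ⊤ := measure_ne_top _ _
  have hEfin : K * ENNReal.ofReal c ≠ ⊤ := ENNReal.mul_ne_top hV₀bdd.2.ne ENNReal.ofReal_ne_top
  have hsub : hitBy X0 Z f α L r
      ⊆ hitBy X0 Z f α Lbar r ∪ {ω | Mb ω ≤ X0 ω ∧ X0 ω ≤ Mb ω + c} := by
    intro ω hω
    have h1 : X0 ω ≤ M ω := hsub1 hω
    rcases lt_or_ge (X0 ω) (Mb ω) with h | h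
    · exact Or.inl (hsub2 h)
    · exact Or.inr ⟨h, le_trans h1 (hcomp ω)⟩
  have hmeas_ineq : (ℙ : Measure Ω) (hitBy X0 Z f α L r)
      ≤ (ℙ : Measure Ω) (hitBy X0 Z f α Lbar r) + K * ENNReal.ofReal c :=
    le_trans (measure_mono hsub) (le_trans (measure_union_le _ _) (add_le_add le_rfl hE))
  have hfinal := (ENNReal.toReal_le_toReal (measure_ne_top _ _)
    (ENNReal.add_ne_top.mpr ⟨hfin1, hEfin⟩)).mpr hmeas_ineq
  rw [ENNReal.toReal_add hfin1 hEfin] at hfinal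
  have hKc : (K * ENNReal.ofReal c).toReal = K.toReal * c := by
    rw [ENNReal.toReal_mul, ENNReal.toReal_ofReal hc0]
  rw [hKc] at hfinal
  rw [hLeq r hr, hMeq r hr]
  linarith

/-- **(Stability bound from the comparison argument.)** If `ν₀` has a density `V₀` with
`‖V₀‖_∞ < ∞`, and `L`, `L̄` are two solutions of (MV) with the same data, then for all `r ≥ 0`,
`|L_r − L̄_r| ≤ |α| ⬝ ‖V₀‖_∞ ⬝ sup_{s ≤ r} |f(L_s) − f(L̄_s)|`. -/
theorem mv_density_stability
    (hprob : IsProbabilityMeasure (ℙ : Measure Ω))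
    (X0 : Ω → ℝ) (hX0meas : Measurable X0) (hX0pos : ∀ ω, 0 < X0 ω)
    (Z : ℝ → Ω → ℝ) (hZmeas : ∀ t, Measurable (Z t))
    (hZcont : ∀ ω, Continuous fun t => Z t ω)
    (hindep : IndepFun X0 (fun ω => fun t => Z t ω) ℙ)
    (f : ℝ → ℝ) (hf : ContinuousOn f (Set.Icc 0 1)) (α : ℝ)
    (V₀ : ℝ → ℝ) (hV₀meas : Measurable V₀) (hV₀nonneg : ∀ x, 0 ≤ V₀ x)
    (hV₀supp : ∀ x ≤ (0 : ℝ), V₀ x = 0)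
    (hdens : Measure.map X0 (ℙ : Measure Ω)
      = volume.withDensity fun x => ENNReal.ofReal (V₀ x))
    (hV₀bdd : MemLp V₀ ⊤ volume)
    (L Lbar : ℝ → ℝ)
    (hL : IsMVSolution X0 Z f α L) (hLbar : IsMVSolution X0 Z f α Lbar)
    (r : ℝ) (hr : 0 ≤ r) :
    |L r - Lbar r| ≤
      |α| * (eLpNorm V₀ ⊤ volume).toReal *
        sSup ((fun s => |f (L s) - f (Lbar s)|) '' Set.Icc (0 : ℝ) r) := by
  obtain ⟨Cf, hCf⟩ := isCompact_Icc.exists_bound_of_continuousOn hf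
  set S := sSup ((fun s => |f (L s) - f (Lbar s)|) '' Set.Icc (0:ℝ) r) with hS
  have hbddS : BddAbove ((fun s => |f (L s) - f (Lbar s)|) '' Set.Icc (0:ℝ) r) := by
    refine ⟨2 * Cf, ?_⟩
    rintro x ⟨s, hsI, rfl⟩
    have h1 : |f (L s)| ≤ Cf := by simpa using hCf _ (hL.2.2.1 s hsI.1)
    have h2 : |f (Lbar s)| ≤ Cf := by simpa using hCf _ (hLbar.2.2.1 s hsI.1)
    calc |f (L s) - f (Lbar s)| ≤ |f (L s)| + |f (Lbar s)| := abs_sub _ _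
      _ ≤ 2 * Cf := by linarith
  have h0mem : (0:ℝ) ∈ (fun s => |f (L s) - f (Lbar s)|) '' Set.Icc (0:ℝ) r :=
    ⟨0, ⟨le_rfl, hr⟩, by show |f (L 0) - f (Lbar 0)| = 0; rw [hL.2.1, hLbar.2.1]; simp⟩
  have hS0 : 0 ≤ S := le_csSup hbddS h0mem
  have hc : ∀ s ∈ Set.Icc (0:ℝ) r, |α| * |f (L s) - f (Lbar s)| ≤ |α| * S :=
    fun s hs => mul_le_mul_of_nonneg_left (le_csSup hbddS ⟨s, hs, rfl⟩) (abs_nonneg α)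
  have hc' : ∀ s ∈ Set.Icc (0:ℝ) r, |α| * |f (Lbar s) - f (L s)| ≤ |α| * S := by
    intro s hs; rw [abs_sub_comm]; exact hc s hs
  have h1 := mv_one_sided hprob X0 hX0meas Z hZmeas hZcont hindep f hf α V₀ hV₀nonneg
    hdens hV₀bdd L Lbar hL hLbar r hr (|α| * S) (mul_nonneg (abs_nonneg α) hS0) hc
  have h2 := mv_one_sided hprob X0 hX0meas Z hZmeas hZcont hindep f hf α V₀ hV₀nonneg
    hdens hV₀bdd Lbar L hLbar hL r hr (|α| * S) (mul_nonneg (abs_nonneg α) hS0) hc'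
  have hring : (eLpNorm V₀ ⊤ volume).toReal * (|α| * S)
      = |α| * (eLpNorm V₀ ⊤ volume).toReal * S := by ring
  rw [abs_sub_le_iff]
  constructor
  · linarith [hring ▸ h1]
  · linarith [hring ▸ h2]
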